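/- Let n ≥ 1 and suppose for each i = 1,...,n we have points c_i, a_i, b_i, p in a metric space with constants M_i ≥ dist(a_i, b_i) and D_i ≥ max(dist(c_i,a_i), dist(c_i,b_i)). Let T ≥ 0 and set r_i = T/(2n) + M_i/2 + D_i. If dist(c_i, p) > r_i for every i, then the total overhead ∑_i (dist(a_i,p) + dist(p,b_i) − dist(a_i,b_i)) is strictly greater than T. -/

import Mathlib

theorem pruning_technique_one
    {X : Type*} [MetricSpace X] (n : ℕ) (hn : 1 ≤ n)
    (c a b : Fin n → X) (p : X) (M D : Fin n → ℝ) (T : ℝ) (hT : 0 ≤ T)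
    (hM : ∀ i, M i ≥ dist (a i) (b i))
    (hD : ∀ i, D i ≥ max (dist (c i) (a i)) (dist (c i) (b i)))
    (h : ∀ i, dist (c i) p > T / (2 * n) + M i / 2 + D i) :
    ∑ i, (dist (a i) p + dist p (b i) - dist (a i) (b i)) > T := by
  have hnpos : (0:ℝ) < n := by exact_mod_cast hn
  have key : ∀ i, dist (a i) p + dist p (b i) - dist (a i) (b i) > T / n := by
    intro i
    have h1 : dist (c i) p ≤ dist (c i) (a i) + dist (a i) p := dist_triangle _ _ _
    have h2 : dist (c i) p ≤ dist (c i) (b i) + dist (b i) p := dist_triangle _ _ _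
    have ha : dist (c i) (a i) ≤ D i := le_trans (le_max_left _ _) (hD i)
    have hb : dist (c i) (b i) ≤ D i := le_trans (le_max_right _ _) (hD i)
    have hcb : dist p (b i) = dist (b i) p := dist_comm _ _
    have hi := h i
    have hM' := hM i
    have : T / (2 * n) + T / (2 * n) = T / n := by field_simp; ring
    nlinarith [hi, h1, h2, ha, hb, hM']
  calc T = ∑ _i : Fin n, T / n := by
        rw [Finset.sum_const, Finset.card_univ, Fintype.card_fin]
        rw [nsmul_eq_mul]; field_simp
    _ < _ := Finset.sum_lt_sum_of_nonempty (Finset.univ_nonempty_iff.mpr ⟨⟨0, hn⟩⟩) (fun i _ => key i)
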